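/- Let k be a field, A a finite-dimensional k-algebra that is self-injective (A is injective as a left A-module), and P a nonzero indecomposable projective left A-module that is finitely generated. Then the socle of P, i.e., the sum of all simple A-submodules of P, is a simple A-module. -/

import Mathlib

/-!
STATEMENT 5: Over a finite-dimensional self-injective algebra `A` over a field
`k`, the socle (the sum of all simple submodules) of any nonzero finitely
generated indecomposable projective left `A`-module `P` is simple.
-/

open Submodule LinearMap

/-- A retract of a Baer module is Baer. -/
lemma baer_of_retract {A M P : Type} [Ring A] [AddCommGroup M] [Module A M]
    [AddCommGroup P] [Module A P] (r : M →ₗ[A] P) (s : P →ₗ[A] M)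
    (hrs : r ∘ₗ s = LinearMap.id) (hM : Module.Baer A M) : Module.Baer A P := by
  intro I g
  obtain ⟨g', hg'⟩ := hM I (s ∘ₗ g)
  refine ⟨r ∘ₗ g', fun x hx => ?_⟩
  have := hg' x hx
  simp only [LinearMap.comp_apply] at this ⊢
  rw [this, ← LinearMap.comp_apply r s, hrs, LinearMap.id_apply]

/-- Finite products of Baer modules are Baer. -/
lemma baer_pi {A : Type} [Ring A] {n : ℕ} (hA : Module.Baer A A) :
    Module.Baer A (Fin n → A) := by
  intro I g
  choose g' hg' using fun j : Fin n => hA I ((LinearMap.proj j) ∘ₗ g)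
  refine ⟨LinearMap.pi g', fun x hx => ?_⟩
  ext j
  exact hg' j x hx

lemma baer_P {A P : Type} [Ring A] [AddCommGroup P] [Module A P]
    [Module.Finite A P] [Module.Projective A P] (hA : Module.Baer A A) :
    Module.Baer A P := by
  obtain ⟨n, f, hf⟩ := Module.Finite.exists_fin' A P
  obtain ⟨s, hs⟩ := Module.projective_lifting_property f LinearMap.id hf
  exact baer_of_retract f s hs (baer_pi hA)
lemma compl_of_maximal {A P : Type} [Ring A] [AddCommGroup P] [Module A P]
    (hB : Module.Baer A P) (C D b : Submodule A P)
    (hCb : Disjoint C b) (hbD : b ≤ D) (hDC : Disjoint D C)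
    (hCmax : ∀ Q, C ≤ Q → Disjoint Q b → Q = C)
    (hDmax : ∀ Q, D ≤ Q → Disjoint Q C → Q = D) :
    IsCompl C D := by
  classical
  set N : Submodule A P := C ⊔ D with hN
  -- the two pieces inside N
  set C' : Submodule A ↥N := C.comap N.subtype with hC'
  set D' : Submodule A ↥N := D.comap N.subtype with hD'
  have hcompl : IsCompl C' D' := by
    constructor
    · rw [disjoint_iff]
      ext x
      simp only [Submodule.mem_inf, Submodule.mem_comap, Submodule.mem_bot, hC', hD']
      constructor
      · rintro ⟨h1, h2⟩
        have : (x : P) ∈ C ⊓ D := ⟨h1, h2⟩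
        rw [(hDC.symm).eq_bot] at this
        exact Subtype.ext this
      · rintro rfl; simp
    · rw [codisjoint_iff, eq_top_iff]
      rintro ⟨x, hx⟩ -
      obtain ⟨c, hc, d, hd, rfl⟩ := Submodule.mem_sup.mp hx
      have hcN : c ∈ N := le_sup_left (α := Submodule A P) hc
      have hdN : d ∈ N := le_sup_right (α := Submodule A P) hd
      refine Submodule.mem_sup.mpr ⟨⟨c, hcN⟩, hc, ⟨d, hdN⟩, hd, rfl⟩
  -- the projection N → P killing D and fixing C
  set π : ↥N →ₗ[A] P := N.subtype ∘ₗ (C'.subtype ∘ₗ C'.projectionOnto D' hcompl) with hπ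
  obtain ⟨f, hf⟩ := hB.extension_property N.subtype Subtype.val_injective π
  have hfext : ∀ x : ↥N, f (x : P) = π x := fun x => by
    have := LinearMap.congr_fun hf x
    simp only [LinearMap.coe_comp, Function.comp_apply, Submodule.coe_subtype] at this
    exact this
  have hfC : ∀ x ∈ C, f x = x := by
    intro x hx
    have hxN : x ∈ N := le_sup_left (α := Submodule A P) hx
    have := hfext ⟨x, hxN⟩
    rwa [hπ, LinearMap.comp_apply, LinearMap.comp_apply,
      Submodule.projectionOnto_apply_of_mem_left hcompl (x := ⟨x, hxN⟩) hx] at this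
  have hfD : ∀ x ∈ D, f x = 0 := by
    intro x hx
    have hxN : x ∈ N := le_sup_right (α := Submodule A P) hx
    have := hfext ⟨x, hxN⟩
    rwa [hπ, LinearMap.comp_apply, LinearMap.comp_apply,
      Submodule.projectionOnto_apply_of_mem_right hcompl (x := ⟨x, hxN⟩) hx,
      LinearMap.map_zero] at this
  -- ker f = D
  have hker : LinearMap.ker f = D := by
    refine hDmax _ (fun x hx => hfD x hx) ?_
    rw [disjoint_comm]
    rw [disjoint_def]
    intro x hxC hxK
    have := hfC x hxC
    rw [LinearMap.mem_ker.mp hxK] at this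
    exact this.symm
  -- range f = C
  have hCle : C ≤ LinearMap.range f := fun x hx => ⟨x, hfC x hx⟩
  have hess : ∀ K ≤ LinearMap.range f, Disjoint K C → K = ⊥ := by
    intro K hKle hKC
    have hL : K.comap f = D := by
      refine hDmax _ ?_ ?_
      · rw [← hker]; intro x hx
        simpa [LinearMap.mem_ker.mp hx] using K.zero_mem
      · rw [disjoint_def]
        intro x hxL hxC
        have hfx : f x = x := hfC x hxC
        have : x ∈ K ⊓ C := ⟨by rw [← hfx]; exact hxL, hxC⟩
        rwa [hKC.eq_bot, Submodule.mem_bot] at this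
    have : Submodule.map f (K.comap f) = K := by
      rw [Submodule.map_comap_eq, inf_eq_right.mpr hKle]
    rw [hL, ← hker] at this
    rw [← this]
    ext y
    simp only [Submodule.mem_map, LinearMap.mem_ker, Submodule.mem_bot]
    constructor
    · rintro ⟨z, hz, rfl⟩; exact hz
    · rintro rfl; exact ⟨0, by simp⟩
  have hrb : Disjoint (LinearMap.range f) b := by
    rw [disjoint_iff]
    exact hess _ inf_le_left (hCb.symm.mono_left inf_le_right)
  have hrange : LinearMap.range f = C := hCmax _ hCle hrb
  refine ⟨hDC.symm, ?_⟩
  rw [codisjoint_iff, eq_top_iff]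
  intro x _hx
  have hfxC : f x ∈ C := hrange ▸ LinearMap.mem_range_self f x
  have h2 : x - f x ∈ D := by
    rw [← hker, LinearMap.mem_ker, map_sub, hfC (f x) hfxC, sub_self]
  exact Submodule.mem_sup.mpr ⟨f x, hfxC, x - f x, h2, by abel⟩

theorem socle_simple_of_indecomposable_projective
    {k A : Type} [Field k] [Ring A] [Algebra k A] [FiniteDimensional k A]
    (hA : Module.Injective A A)
    (P : Type) [AddCommGroup P] [Module A P] [Nontrivial P]
    [Module.Finite A P] [Module.Projective A P]
    (hP : ∀ p q : Submodule A P, IsCompl p q → p = ⊥ ∨ q = ⊥) :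
    IsSimpleModule A ↥(sSup {p : Submodule A P | IsSimpleModule A ↥p}) := by
  classical
  -- P is Artinian over A
  have hartA : IsArtinian k A := inferInstance
  have hartAA : IsArtinian A A := isArtinian_of_tower k hartA
  have : IsArtinianRing A := hartAA
  have hart : IsArtinian A P := inferInstance
  have hatomic : IsAtomic (Submodule A P) :=
    isAtomic_of_orderBot_wellFounded_lt (wellFounded_lt (α := Submodule A P))
  -- rephrase the socle in terms of atoms
  have hset : {p : Submodule A P | IsSimpleModule A ↥p} = {p : Submodule A P | IsAtom p} :=
    Set.ext fun p => isSimpleModule_iff_isAtom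
  rw [hset, isSimpleModule_iff_isAtom]
  set S : Submodule A P := sSup {p : Submodule A P | IsAtom p} with hS
  by_contra hnot
  -- pick an atom a
  obtain ⟨a, ha⟩ : ∃ a : Submodule A P, IsAtom a := by
    rcases hatomic.eq_bot_or_exists_atom_le (⊤ : Submodule A P) with h | ⟨a, ha, -⟩
    · exact absurd h top_ne_bot
    · exact ⟨a, ha⟩
  have haS : a ≤ S := le_sSup ha
  -- pick an atom b not below a
  obtain ⟨c, hc, hcb⟩ : ∃ c : Submodule A P, IsAtom c ∧ ¬ c ≤ a := by
    by_contra h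
    push_neg at h
    have : S ≤ a := sSup_le fun p hp => h p hp
    exact hnot (le_antisymm this haS ▸ ha)
  set b := c with hb
  have hab : Disjoint a b := by
    rcases hc.le_iff.mp (inf_le_right : a ⊓ b ≤ b) with h | h
    · exact disjoint_iff.mpr h
    · exact absurd (h ▸ inf_le_left) hcb
  -- Baer property of P
  have hBA : Module.Baer A A := Module.Baer.of_injective hA
  have hBP : Module.Baer A P := baer_P hBA
  -- Zorn: chains of submodules disjoint from a fixed submodule
  have zorn : ∀ (T x : Submodule A P), Disjoint x T →
      ∃ C, x ≤ C ∧ Maximal (fun Q => Disjoint Q T) C := by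
    intro T x hx
    refine zorn_le_nonempty₀ {Q | Disjoint Q T} (fun ch hch hchain y hy => ?_) x hx
    refine ⟨sSup ch, ?_, fun z hz => le_sSup hz⟩
    rw [Set.mem_setOf_eq, disjoint_def]
    intro z hz hzT
    obtain ⟨Q, hQ, hzQ⟩ := (Submodule.mem_sSup_of_directed ⟨y, hy⟩
      (hchain.directedOn)).mp hz
    exact disjoint_def.mp (hch hQ) z hzQ hzT
  obtain ⟨C, haC, hCmaxm⟩ := zorn b a hab
  have hCb : Disjoint C b := hCmaxm.prop
  obtain ⟨D, hbD, hDmaxm⟩ := zorn C b hCb.symm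
  have hDC : Disjoint D C := hDmaxm.prop
  have hCmax : ∀ Q, C ≤ Q → Disjoint Q b → Q = C :=
    fun Q h1 h2 => le_antisymm (hCmaxm.le_of_ge h2 h1) h1
  have hDmax : ∀ Q, D ≤ Q → Disjoint Q C → Q = D :=
    fun Q h1 h2 => le_antisymm (hDmaxm.le_of_ge h2 h1) h1
  have hcompl : IsCompl C D := compl_of_maximal hBP C D b hCb hbD hDC hCmax hDmax
  rcases hP C D hcompl with h | h
  · exact ha.1 (le_bot_iff.mp (h ▸ haC))
  · exact hc.1 (le_bot_iff.mp (h ▸ hbD))
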